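/- Rank-based exchangeability lemma: If s_1, ..., s_{n+1} are exchangeable real random variables that are almost surely pairwise distinct, then for every k ∈ {1, ..., n+1}, P(rank of s_{n+1} among s_1,...,s_{n+1} equals k) = 1/(n+1), where the rank of s_{n+1} is 1 + #{i ≤ n : s_i < s_{n+1}}. -/

import Mathlib

open MeasureTheory Finset

/-- For an injective `f : Fin (N+1) → ℝ` and `m ≤ N`, there is exactly one index whose
rank (number of strictly smaller values) equals `m`. -/
lemma exists_unique_rank {N : ℕ} (f : Fin (N + 1) → ℝ) (hf : Function.Injective f)
    (m : ℕ) (hm : m ≤ N) :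
    ∃! j : Fin (N + 1), (Finset.univ.filter fun i => f i < f j).card = m := by
  have hcard_le : ∀ j : Fin (N + 1), (Finset.univ.filter fun i => f i < f j).card ≤ N := by
    intro j
    have hsub : (Finset.univ.filter fun i => f i < f j) ⊆ Finset.univ.erase j := by
      intro i hi
      simp only [Finset.mem_filter] at hi
      refine Finset.mem_erase.mpr ⟨?_, Finset.mem_univ i⟩
      rintro rfl; exact lt_irrefl _ hi.2
    calc (Finset.univ.filter fun i => f i < f j).card
        ≤ (Finset.univ.erase j).card := Finset.card_le_card hsub
      _ = N := by rw [Finset.card_erase_of_mem (Finset.mem_univ j), Finset.card_univ]; simp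
  set g : Fin (N + 1) → Fin (N + 1) :=
    fun j => ⟨(Finset.univ.filter fun i => f i < f j).card, Nat.lt_succ_of_le (hcard_le j)⟩
    with hg
  have hmono : ∀ a b : Fin (N + 1), f a < f b →
      (Finset.univ.filter fun i => f i < f a).card <
      (Finset.univ.filter fun i => f i < f b).card := by
    intro a b hab
    apply Finset.card_lt_card
    constructor
    · intro i hi
      simp only [Finset.mem_filter] at hi ⊢
      exact ⟨hi.1, lt_trans hi.2 hab⟩
    · intro hsub
      have ha : a ∈ Finset.univ.filter fun i => f i < f b :=
        Finset.mem_filter.mpr ⟨Finset.mem_univ a, hab⟩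
      have := hsub ha
      simp only [Finset.mem_filter] at this
      exact lt_irrefl _ this.2
  have hginj : Function.Injective g := by
    intro a b hab
    by_contra hne
    have hfne : f a ≠ f b := fun h => hne (hf h)
    have hcards : (Finset.univ.filter fun i => f i < f a).card =
        (Finset.univ.filter fun i => f i < f b).card := congrArg Fin.val hab
    rcases lt_or_gt_of_ne hfne with h | h
    · exact absurd hcards (Nat.ne_of_lt (hmono a b h))
    · exact absurd hcards.symm (Nat.ne_of_lt (hmono b a h))
  have hgsurj : Function.Surjective g := (Finite.injective_iff_surjective).mp hginj
  obtain ⟨j, hj⟩ := hgsurj ⟨m, Nat.lt_succ_of_le hm⟩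
  refine ⟨j, congrArg Fin.val hj, ?_⟩
  intro y hy
  apply hginj
  rw [hj]
  exact Fin.ext hy

/-- Rank-based exchangeability lemma: for exchangeable, almost surely pairwise distinct
`s₁,…,s_{n+1}`, the rank of `s_{n+1}` (namely `1 + #{i ≤ n : sᵢ < s_{n+1}}`) is uniform on
`{1,…,n+1}`. -/
theorem rank_of_exchangeable_uniform
    {Ω : Type*} [MeasurableSpace Ω] (P : Measure Ω) [IsProbabilityMeasure P]
    (n : ℕ)
    (s : Fin (n + 1) → Ω → ℝ) (hmeas : ∀ i, Measurable (s i))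
    (hexch : ∀ π : Equiv.Perm (Fin (n + 1)),
      P.map (fun ω => fun i => s (π i) ω) = P.map (fun ω => fun i => s i ω))
    (hdistinct : ∀ᵐ ω ∂P, Function.Injective fun i => s i ω) :
    ∀ k : ℕ, 1 ≤ k → k ≤ n + 1 →
      P {ω | 1 + (Finset.univ.filter fun i : Fin n =>
          s i.castSucc ω < s (Fin.last n) ω).card = k} = ((n + 1 : ℕ) : ENNReal)⁻¹ := by
  intro k hk1 hk2
  obtain ⟨m, rfl⟩ : ∃ m, k = m + 1 := ⟨k - 1, (Nat.succ_pred_eq_of_pos hk1).symm⟩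
  have hm : m ≤ n := by omega
  -- ranks
  set r : Fin (n + 1) → Ω → ℕ :=
    fun j ω => (Finset.univ.filter fun i => s i ω < s j ω).card with hr
  -- the target set equals {ω | r (last) ω = m}
  have hcard : ∀ ω, (1 + (Finset.univ.filter fun i : Fin n =>
      s i.castSucc ω < s (Fin.last n) ω).card = m + 1) ↔ r (Fin.last n) ω = m := by
    intro ω
    have hEq : r (Fin.last n) ω
        = (Finset.univ.filter fun i : Fin n => s i.castSucc ω < s (Fin.last n) ω).card := by
      rw [hr]
      simp only
      rw [Finset.card_filter, Finset.card_filter, Fin.sum_univ_castSucc]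
      simp
    omega
  have hsetEq : {ω | 1 + (Finset.univ.filter fun i : Fin n =>
      s i.castSucc ω < s (Fin.last n) ω).card = m + 1} = {ω | r (Fin.last n) ω = m} := by
    ext ω; exact hcard ω
  rw [hsetEq]
  -- measurability of ranks
  have hrmeas : ∀ j, Measurable (r j) := by
    intro j
    have : r j = fun ω => ∑ i : Fin (n + 1), if s i ω < s j ω then 1 else 0 := by
      funext ω; rw [hr]; simp only; rw [Finset.card_filter]
    rw [this]
    exact Finset.measurable_sum _ fun i _ =>
      Measurable.ite (measurableSet_lt (hmeas i) (hmeas j)) measurable_const measurable_const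
  set A : Fin (n + 1) → Set Ω := fun j => {ω | r j ω = m} with hA
  have hAmeas : ∀ j, MeasurableSet (A j) := by
    intro j
    have : A j = r j ⁻¹' {m} := rfl
    rw [this]
    exact hrmeas j (measurableSet_singleton m)
  -- exchangeability: all A j have the same measure
  have hmapP : Measurable (fun ω => fun i => s i ω) := measurable_pi_lambda _ hmeas
  set S : Set (Fin (n + 1) → ℝ) :=
    {x | (Finset.univ.filter fun i => x i < x (Fin.last n)).card = m} with hSdef
  have hS : MeasurableSet S := by
    have hfun : Measurable fun x : Fin (n + 1) → ℝ =>
        (Finset.univ.filter fun i => x i < x (Fin.last n)).card := by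
      have : (fun x : Fin (n + 1) → ℝ =>
          (Finset.univ.filter fun i => x i < x (Fin.last n)).card)
          = fun x => ∑ i : Fin (n + 1), if x i < x (Fin.last n) then 1 else 0 := by
        funext x; rw [Finset.card_filter]
      rw [this]
      exact Finset.measurable_sum _ fun i _ =>
        Measurable.ite (measurableSet_lt (measurable_pi_apply i)
          (measurable_pi_apply (Fin.last n))) measurable_const measurable_const
    have : S = (fun x : Fin (n + 1) → ℝ =>
        (Finset.univ.filter fun i => x i < x (Fin.last n)).card) ⁻¹' {m} := rfl
    rw [this]
    exact hfun (measurableSet_singleton m)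
  have key : ∀ j, P (A j) = P (A (Fin.last n)) := by
    intro j
    set π := Equiv.swap j (Fin.last n) with hπ
    have hmap2 : Measurable (fun ω => fun i => s (π i) ω) :=
      measurable_pi_lambda _ fun i => hmeas _
    have h1 : P (A (Fin.last n)) = P.map (fun ω => fun i => s i ω) S := by
      rw [Measure.map_apply hmapP hS]
      rfl
    rw [h1, ← hexch π, Measure.map_apply hmap2 hS]
    have hπlast : π (Fin.last n) = j := Equiv.swap_apply_right _ _
    congr 1
    ext ω
    simp only [Set.mem_preimage, hSdef, Set.mem_setOf_eq, hA, hr, hπlast]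
    have : (Finset.univ.filter fun i => s (π i) ω < s j ω).card
        = (Finset.univ.filter fun i => s i ω < s j ω).card := by
      rw [Finset.card_filter, Finset.card_filter]
      exact Equiv.sum_comp π fun i => if s i ω < s j ω then 1 else 0
    rw [this]
  -- the almost-sure distinctness set
  set D : Set Ω := {ω | Function.Injective fun i => s i ω} with hD
  have hDmeas : MeasurableSet D := by
    have hDeq : D = ⋂ a, ⋂ b, {ω | s a ω = s b ω → a = b} := by
      ext ω
      simp only [hD, Set.mem_setOf_eq, Set.mem_iInter]
      exact ⟨fun h a b hab => h hab, fun h a b hab => h a b hab⟩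
    rw [hDeq]
    refine MeasurableSet.iInter fun a => MeasurableSet.iInter fun b => ?_
    by_cases hab : a = b
    · simp [hab]
    · have : {ω | s a ω = s b ω → a = b} = {ω | s a ω = s b ω}ᶜ := by
        ext ω; simp [hab]
      rw [this]
      exact (measurableSet_eq_fun (hmeas a) (hmeas b)).compl
  have hPDc : P Dᶜ = 0 := by
    have := MeasureTheory.ae_iff.mp hdistinct
    simpa [hD, Set.compl_def] using this
  have hPD : P D = 1 := by
    have := measure_compl hDmeas (measure_ne_top P D)
    rw [hPDc, measure_univ] at this
    exact le_antisymm prob_le_one (tsub_eq_zero_iff_le.mp this.symm)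
  -- A j ∩ D partition D
  have hcover : ∀ ω ∈ D, ∃! j, r j ω = m := fun ω hω => exists_unique_rank _ hω m hm
  have hdisj : Pairwise (Function.onFun Disjoint fun j => A j ∩ D) := by
    intro a b hab
    refine Set.disjoint_left.mpr ?_
    rintro ω ⟨ha, hωD⟩ ⟨hb, _⟩
    obtain ⟨j, -, huniq⟩ := hcover ω hωD
    exact hab ((huniq a ha).trans (huniq b hb).symm)
  have hunion : (⋃ j, A j ∩ D) = D := by
    apply Set.Subset.antisymm
    · exact Set.iUnion_subset fun j => Set.inter_subset_right
    · intro ω hω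
      obtain ⟨j, hj, -⟩ := hcover ω hω
      exact Set.mem_iUnion.mpr ⟨j, hj, hω⟩
  have hPinter : ∀ j, P (A j ∩ D) = P (A j) := by
    intro j
    apply le_antisymm (measure_mono Set.inter_subset_left)
    have hsub : A j ⊆ (A j ∩ D) ∪ Dᶜ := by
      intro ω hω
      by_cases hωD : ω ∈ D
      · exact Or.inl ⟨hω, hωD⟩
      · exact Or.inr hωD
    calc P (A j) ≤ P ((A j ∩ D) ∪ Dᶜ) := measure_mono hsub
      _ ≤ P (A j ∩ D) + P Dᶜ := measure_union_le _ _
      _ = P (A j ∩ D) := by rw [hPDc, add_zero]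
  have hsum : ∑ j : Fin (n + 1), P (A j ∩ D) = 1 := by
    have := MeasureTheory.measure_iUnion (μ := P) hdisj fun j => (hAmeas j).inter hDmeas
    rw [hunion, hPD] at this
    rw [tsum_fintype] at this
    exact this.symm
  have hsum' : ((n + 1 : ℕ) : ENNReal) * P (A (Fin.last n)) = 1 := by
    have : ∀ j : Fin (n + 1), P (A j ∩ D) = P (A (Fin.last n)) := fun j =>
      (hPinter j).trans (key j)
    rw [Finset.sum_congr rfl fun j _ => this j, Finset.sum_const, Finset.card_univ] at hsum
    simpa [nsmul_eq_mul] using hsum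
  have hne : ((n + 1 : ℕ) : ENNReal) ≠ 0 := by
    simp
  have hnt : ((n + 1 : ℕ) : ENNReal) ≠ ⊤ := ENNReal.natCast_ne_top _
  calc P {ω | r (Fin.last n) ω = m}
      = ((n + 1 : ℕ) : ENNReal)⁻¹ * (((n + 1 : ℕ) : ENNReal) * P (A (Fin.last n))) := by
        rw [← mul_assoc, ENNReal.inv_mul_cancel hne hnt, one_mul]
    _ = ((n + 1 : ℕ) : ENNReal)⁻¹ := by rw [hsum', mul_one]
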